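/- Let F_q be a finite field, let k < n, and let B be an (n−k) × k Cauchy matrix over F_q. Form the n × k systematic generator matrix G_S obtained by stacking the k × k identity matrix I_k on top of B. Then for every subset R of row indices of G_S with |R| = k, the k × k submatrix of G_S formed by the rows in R is invertible; in particular the systematic code generated by G_S is MDS. -/

import Mathlib

/-- For the systematic matrix `G_S = [I_k; B]` with `B` an `(n-k) × k` Cauchy matrix over a
finite field, every `k × k` submatrix formed by `k` of the `n` rows is invertible; in
particular the systematic code generated by `G_S` is MDS. -/
theorem stmt_8 {F : Type*} [Field F] [Fintype F] [DecidableEq F]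
    {n k : ℕ} (hkn : k < n)
    (h : Fin (n - k) → F) (f : Fin k → F)
    (hh : Function.Injective h) (hf : Function.Injective f)
    (hhf : ∀ i j, h i ≠ f j)
    (B : Matrix (Fin (n - k)) (Fin k) F) (hB : ∀ i j, B i j = (h i - f j)⁻¹)
    (GS : Matrix (Fin k ⊕ Fin (n - k)) (Fin k) F) (hGS : GS = Matrix.fromRows 1 B)
    (r : Fin k → Fin k ⊕ Fin (n - k)) (hr : Function.Injective r) :
    IsUnit (GS.submatrix r id) := by
  rw [Matrix.isUnit_iff_isUnit_det, isUnit_iff_ne_zero]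
  intro hdet
  obtain ⟨v, hv, hmv⟩ := Matrix.exists_mulVec_eq_zero_iff.mpr hdet
  -- k is positive since v ≠ 0
  obtain ⟨j0, -⟩ := Function.ne_iff.mp hv
  have hk : 0 < k := j0.pos
  -- the k distinct evaluation points
  set g : Fin k → F := fun i => Sum.elim f h (r i) with hg
  have hginj : Function.Injective g := by
    intro i i' hii
    apply hr
    rcases e : r i with a | b <;> rcases e' : r i' with a' | b' <;>
      simp only [hg, e, e', Sum.elim_inl, Sum.elim_inr] at hii
    · exact congrArg Sum.inl (hf hii)
    · exact absurd hii.symm (hhf b' a)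
    · exact absurd hii (hhf b a')
    · exact congrArg Sum.inr (hh hii)
  -- the polynomial
  set P : Polynomial F :=
    ∑ j, Polynomial.C (v j) *
      ∏ j' ∈ Finset.univ.erase j, (Polynomial.X - Polynomial.C (f j')) with hP
  have evalP : ∀ x : F, P.eval x = ∑ j, v j * ∏ j' ∈ Finset.univ.erase j, (x - f j') := by
    intro x
    simp [hP, Polynomial.eval_finset_sum, Polynomial.eval_prod]
  -- the rows of the linear system
  have hrow : ∀ i, ∑ j, GS (r i) j * v j = 0 := by
    intro i
    have := congrFun hmv i
    simpa [Matrix.mulVec, dotProduct, Matrix.submatrix_apply] using this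
  have heval : ∀ i, P.eval (g i) = 0 := by
    intro i
    rcases e : r i with a | b
    · -- identity row: v a = 0, and the other terms contain a zero factor
      have hva : v a = 0 := by
        have := hrow i
        rw [e] at this
        simpa [hGS, Matrix.fromRows_apply_inl, Matrix.one_apply] using this
      rw [evalP]
      simp only [hg, e, Sum.elim_inl]
      refine Finset.sum_eq_zero fun j _ => ?_
      rcases eq_or_ne j a with rfl | hja
      · simp [hva]
      · refine mul_eq_zero_of_right _ (Finset.prod_eq_zero (i := a) ?_ (by simp))
        simp [Finset.mem_erase, Ne.symm hja]
    · -- Cauchy row: multiply the relation by ∏ (h b - f j')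
      have eq0 : ∑ j, (h b - f j)⁻¹ * v j = 0 := by
        have := hrow i
        rw [e] at this
        simpa [hGS, Matrix.fromRows_apply_inr, hB] using this
      have hne : ∀ j, h b - f j ≠ 0 := fun j => sub_ne_zero.mpr (hhf b j)
      rw [evalP]
      simp only [hg, e, Sum.elim_inr]
      have := congrArg (· * ∏ j', (h b - f j')) eq0
      simp only [Finset.sum_mul, zero_mul] at this
      rw [← this]
      refine Finset.sum_congr rfl fun j _ => ?_
      rw [← Finset.mul_prod_erase Finset.univ _ (Finset.mem_univ j)]
      field_simp [hne j]
  have hdeg : P.natDegree < Fintype.card (Fin k) := by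
    rw [Fintype.card_fin]
    refine lt_of_le_of_lt (Polynomial.natDegree_sum_le _ _) ?_
    rw [Finset.fold_max_lt]
    refine ⟨hk, fun j _ => ?_⟩
    refine lt_of_le_of_lt (Polynomial.natDegree_mul_le) ?_
    have hprod : (∏ j' ∈ Finset.univ.erase j,
        (Polynomial.X - Polynomial.C (f j'))).natDegree = k - 1 := by
      rw [Polynomial.natDegree_prod _ _ (fun j' _ => Polynomial.X_sub_C_ne_zero (f j'))]
      simp [Polynomial.natDegree_X_sub_C, Finset.card_erase_of_mem]
    rw [hprod, Polynomial.natDegree_C]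
    omega
  have hP0 : P = 0 :=
    Polynomial.eq_zero_of_natDegree_lt_card_of_eval_eq_zero P hginj heval hdeg
  -- conclude v = 0, contradiction
  apply hv
  funext j
  have := evalP (f j)
  rw [hP0, Polynomial.eval_zero] at this
  have hterm : ∑ j'', v j'' * ∏ j' ∈ Finset.univ.erase j'', (f j - f j') =
      v j * ∏ j' ∈ Finset.univ.erase j, (f j - f j') := by
    refine Finset.sum_eq_single j (fun j'' _ hj'' => ?_) (by simp)
    refine mul_eq_zero_of_right _ (Finset.prod_eq_zero (i := j) ?_ (by simp))
    simp [Finset.mem_erase, Ne.symm hj'']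
  rw [hterm] at this
  have hpne : ∏ j' ∈ Finset.univ.erase j, (f j - f j') ≠ 0 := by
    refine Finset.prod_ne_zero_iff.mpr fun j' hj' => sub_ne_zero.mpr fun hc => ?_
    exact (Finset.mem_erase.mp hj').1 (hf hc).symm
  simpa [hpne] using this.symm
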